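/- Let $M$ be a compact metric space and $f\colon M\to M$ a homeomorphism that is not periodic. Then $B(f,C^0(M)) = \{u\circ f - u : u\in C^0(M)\}$ is not closed in $C^0(M)$ (with the uniform norm). -/

import Mathlib

open Function Set Metric

set_option maxHeartbeats 800000

/-- Non-periodicity gives arbitrarily long injective orbit segments. -/
lemma exists_inj_orbit_aux {M : Type*} [TopologicalSpace M] (f : M ≃ₜ M)
    (hnp : ∀ q : ℕ, 1 ≤ q → (⇑f)^[q] ≠ id) (n : ℕ) :
    ∃ x : M, ∀ i j, i ≤ n → j ≤ n → (⇑f)^[i] x = (⇑f)^[j] x → i = j := by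
  have hfac := hnp n.factorial n.factorial_pos
  obtain ⟨x, hx⟩ := Function.ne_iff.mp hfac
  refine ⟨x, ?_⟩
  have key : ∀ i j, i < j → j ≤ n → (⇑f)^[i] x = (⇑f)^[j] x → False := by
    intro i j hij hj h
    have ha : (⇑f)^[j - i] x = x := by
      have h1 : (⇑f)^[j] x = (⇑f)^[i] ((⇑f)^[j - i] x) := by
        rw [← Function.iterate_add_apply]
        congr 1
        omega
      have hinj : Function.Injective ((⇑f)^[i]) := (f.injective).iterate i
      exact hinj (by rw [← h1, ← h])
    obtain ⟨c, hc⟩ := Nat.dvd_factorial (by omega : 0 < j - i) (by omega : j - i ≤ n)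
    apply hx
    have : (⇑f)^[n.factorial] x = ((⇑f)^[j - i])^[c] x := by
      rw [← Function.iterate_mul, ← hc]
    rw [this, Function.iterate_fixed ha, id]
  intro i j hi hj h
  rcases lt_trichotomy i j with hlt | heq | hgt
  · exact absurd h (fun h => key i j hlt hj h)
  · exact heq
  · exact absurd h.symm (fun h => key j i hgt hi h)

/-- If a homeomorphism `f` of a compact metric space is not periodic, then its space of
continuous coboundaries is not closed in `C(M, ℝ)` with the uniform norm. -/
theorem coboundaries_not_closed_of_not_periodic
    {M : Type*} [MetricSpace M] [CompactSpace M] (f : M ≃ₜ M)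
    (hnp : ∀ q : ℕ, 1 ≤ q → (⇑f)^[q] ≠ id) :
    ¬ IsClosed {φ : C(M, ℝ) | ∃ u : C(M, ℝ), ∀ x, φ x = u (f x) - u x} := by
  intro hB
  classical
  -- The coboundary operator as a linear map
  set T : C(M, ℝ) →ₗ[ℝ] C(M, ℝ) :=
    { toFun := fun u => u.comp ⟨⇑f, f.continuous⟩ - u
      map_add' := by intro u v; ext x; simp; ring
      map_smul' := by intro c u; ext x; simp; ring } with hTdef
  have hTapp : ∀ (u : C(M, ℝ)) (x : M), T u x = u (f x) - u x := fun u x => rfl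
  have hTb : ∀ u : C(M, ℝ), ‖T u‖ ≤ 2 * ‖u‖ := by
    intro u
    refine ContinuousMap.norm_le _ (by positivity) |>.mpr fun x => ?_
    have h1 := u.norm_coe_le_norm (f x)
    have h2 := u.norm_coe_le_norm x
    simp only [hTapp, Real.norm_eq_abs] at *
    calc |u (f x) - u x| ≤ |u (f x)| + |u x| := abs_sub _ _
      _ ≤ 2 * ‖u‖ := by linarith
  -- the coboundary set is the range of T
  have hset : {φ : C(M, ℝ) | ∃ u : C(M, ℝ), ∀ x, φ x = u (f x) - u x}
      = ↑(LinearMap.range T) := by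
    ext φ
    simp only [mem_setOf_eq, SetLike.mem_coe, LinearMap.mem_range]
    constructor
    · rintro ⟨u, hu⟩; exact ⟨u, by ext x; rw [hTapp]; exact (hu x).symm⟩
    · rintro ⟨u, rfl⟩; exact ⟨u, fun x => hTapp u x⟩
  rw [hset] at hB
  haveI : CompleteSpace (LinearMap.range T) := hB.completeSpace_coe
  set Tc : C(M, ℝ) →L[ℝ] C(M, ℝ) := T.mkContinuous 2 hTb with hTcdef
  set Tc' : C(M, ℝ) →L[ℝ] LinearMap.range T :=
    Tc.codRestrict (LinearMap.range T) (fun u => LinearMap.mem_range_self T u) with hTc'def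
  have hsurj : Function.Surjective Tc' := by
    rintro ⟨φ, u, rfl⟩
    exact ⟨u, rfl⟩
  -- open mapping theorem: bounded right inverse
  obtain ⟨C, hC0, hC⟩ := ContinuousLinearMap.exists_preimage_norm_le (𝕜 := ℝ) (𝕜' := ℝ) (σ := RingHom.id ℝ) (E := C(M, ℝ)) (F := LinearMap.range T) Tc' hsurj
  -- choose N
  obtain ⟨N0, hN0⟩ := exists_nat_gt (2 * C)
  set N : ℕ := N0 + 1 with hNdef
  have hN1 : 1 ≤ N := by omega
  have hNC : 2 * C < (N : ℝ) := lt_of_lt_of_le hN0 (by exact_mod_cast Nat.le_succ N0)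
  -- injective orbit segment of length 3N
  obtain ⟨x, hinj⟩ := exists_inj_orbit_aux f hnp (3 * N)
  -- Urysohn function
  obtain ⟨h, h0, h1, hI⟩ :
      ∃ h : C(M, ℝ), (∀ i < 2*N, h ((⇑f)^[i] x) = 0) ∧
        (∀ i, 2*N ≤ i → i ≤ 3*N → h ((⇑f)^[i] x) = 1) ∧
        (∀ y, h y ∈ Icc (0:ℝ) 1) := by
    set pt : ℕ → M := fun i => (⇑f)^[i] x with hpt
    set s : Set M := pt '' (Set.Iio (2*N)) with hs
    set t : Set M := pt '' (Set.Icc (2*N) (3*N)) with ht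
    have hsc : IsClosed s := ((Set.finite_Iio _).image pt).isClosed
    have htc : IsClosed t := ((Set.finite_Icc _ _).image pt).isClosed
    have hd : Disjoint s t := by
      rw [Set.disjoint_left]
      rintro a ⟨i, hi, rfl⟩ ⟨j, ⟨hj1, hj2⟩, hij⟩
      simp only [Set.mem_Iio] at hi
      have := hinj j i (by omega) (by omega) hij
      omega
    obtain ⟨h, h0, h1, hI⟩ := exists_continuous_zero_one_of_isClosed hsc htc hd
    refine ⟨h, fun i hi => ?_, fun i hi1 hi2 => ?_, hI⟩
    · simpa using h0 ⟨i, Set.mem_Iio.mpr hi, rfl⟩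
    · simpa using h1 ⟨i, ⟨hi1, hi2⟩, rfl⟩
  -- the transfer function v
  have hiter : ∀ j : ℕ, Continuous ((⇑f.symm)^[j]) := fun j => f.symm.continuous.iterate j
  set v : C(M, ℝ) := ∑ j ∈ Finset.range N, h.comp ⟨(⇑f.symm)^[j], hiter j⟩ with hv
  have hvapp : ∀ y, v y = ∑ j ∈ Finset.range N, h ((⇑f.symm)^[j] y) := by
    intro y; rw [hv]; simp
  have hli : ∀ (j : ℕ) (z : M), (⇑f.symm)^[j] ((⇑f)^[j] z) = z := fun j z =>
    (Function.LeftInverse.iterate f.symm_apply_apply j) z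
  have symm_iter : ∀ j m, j ≤ m → ∀ z : M, (⇑f.symm)^[j] ((⇑f)^[m] z) = (⇑f)^[m-j] z := by
    intro j m hjm z
    have hm : (⇑f)^[m] z = (⇑f)^[j] ((⇑f)^[m-j] z) := by
      rw [← Function.iterate_add_apply]; congr 1; omega
    rw [hm, hli]
  -- coboundary of v has small norm
  have hcob : ∀ y, v (f y) - v y = h (f y) - h ((⇑f.symm)^[N-1] y) := by
    intro y
    rw [hvapp, hvapp]
    have key : ∀ j, h ((⇑f.symm)^[j] y) = h ((⇑f.symm)^[j+1] (f y)) := by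
      intro j
      rw [Function.iterate_succ_apply, f.symm_apply_apply]
    calc (∑ j ∈ Finset.range N, h ((⇑f.symm)^[j] (f y)))
          - ∑ j ∈ Finset.range N, h ((⇑f.symm)^[j] y)
        = ∑ j ∈ Finset.range N, (h ((⇑f.symm)^[j] (f y)) - h ((⇑f.symm)^[j+1] (f y))) := by
          rw [Finset.sum_sub_distrib]
          congr 1
          exact Finset.sum_congr rfl fun j _ => (key j)
      _ = h ((⇑f.symm)^[0] (f y)) - h ((⇑f.symm)^[N] (f y)) := Finset.sum_range_sub' _ N
      _ = h (f y) - h ((⇑f.symm)^[N-1] y) := by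
          have hNe : N - 1 + 1 = N := by omega
          rw [key (N-1), hNe]
          simp
  set φ : C(M, ℝ) := T v with hφ
  have hφapp : ∀ y, φ y = v (f y) - v y := fun y => hTapp v y
  have hφnorm : ‖φ‖ ≤ 1 := by
    refine ContinuousMap.norm_le _ (by norm_num) |>.mpr fun y => ?_
    rw [Real.norm_eq_abs, hφapp, hcob]
    obtain ⟨ha1, ha2⟩ := hI (f y)
    obtain ⟨hb1, hb2⟩ := hI ((⇑f.symm)^[N-1] y)
    rw [abs_sub_le_iff]
    constructor <;> linarith
  -- values of v on the orbit
  have hvN : v ((⇑f)^[N] x) = 0 := by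
    rw [hvapp]
    refine Finset.sum_eq_zero fun j hj => ?_
    rw [Finset.mem_range] at hj
    rw [symm_iter j N (by omega)]
    exact h0 (N - j) (by omega)
  have hv3N : v ((⇑f)^[3*N] x) = N := by
    rw [hvapp]
    rw [Finset.sum_congr rfl (fun j hj => ?_)]
    · rw [Finset.sum_const, Finset.card_range, nsmul_eq_mul, mul_one]
    · rw [Finset.mem_range] at hj
      rw [symm_iter j (3*N) (by omega)]
      exact h1 (3*N - j) (by omega) (by omega)
  -- get a bounded primitive u of φ from the open mapping theorem
  have hφmem : φ ∈ LinearMap.range T := LinearMap.mem_range_self T v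
  obtain ⟨u, huT, hunorm⟩ := hC ⟨φ, hφmem⟩
  have huTφ : ∀ y, φ y = u (f y) - u y := by
    have : T u = φ := congrArg Subtype.val huT
    intro y
    rw [← this, hTapp]
  have hunorm' : ‖u‖ ≤ C := by
    have hnc : ‖(⟨φ, hφmem⟩ : LinearMap.range T)‖ = ‖φ‖ := rfl
    calc ‖u‖ ≤ C * ‖(⟨φ, hφmem⟩ : LinearMap.range T)‖ := hunorm
      _ = C * ‖φ‖ := by rw [hnc]
      _ ≤ C * 1 := mul_le_mul_of_nonneg_left hφnorm (le_of_lt hC0)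
      _ = C := mul_one C
  -- telescoping: Birkhoff sums of φ are differences of any primitive
  have tele : ∀ (w : C(M, ℝ)), (∀ z, φ z = w (f z) - w z) → ∀ (y : M) (n : ℕ),
      w ((⇑f)^[n] y) - w y = ∑ k ∈ Finset.range n, φ ((⇑f)^[k] y) := by
    intro w hw y n
    induction n with
    | zero => simp
    | succ n ih =>
      rw [Finset.sum_range_succ, ← ih, Function.iterate_succ_apply']
      have := hw ((⇑f)^[n] y)
      linarith
  have hiter3N : (⇑f)^[2*N] ((⇑f)^[N] x) = (⇑f)^[3*N] x := by
    rw [← Function.iterate_add_apply]; congr 1; omega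
  have hu2 := tele u huTφ ((⇑f)^[N] x) (2*N)
  have hv2 := tele v hφapp ((⇑f)^[N] x) (2*N)
  rw [hiter3N] at hu2 hv2
  have hmain : u ((⇑f)^[3*N] x) - u ((⇑f)^[N] x) = N := by
    rw [hu2, ← hv2, hv3N, hvN, sub_zero]
  have hb1 := u.norm_coe_le_norm ((⇑f)^[3*N] x)
  have hb2 := u.norm_coe_le_norm ((⇑f)^[N] x)
  rw [Real.norm_eq_abs] at hb1 hb2
  have := abs_le.mp hb1
  have := abs_le.mp hb2
  have : (N : ℝ) ≤ 2 * C := by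
    rw [← hmain]
    have h1' := abs_le.mp hb1
    have h2' := abs_le.mp hb2
    linarith
  linarith
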